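/- arXiv:1307.2700 — 5 statements merged into one kernel-verified Lean document; each statement's English description precedes it below -/
import Mathlib

section
/- Let P be a finite set of points in ℝ^d, let p, q ∈ P with p ≠ q, and let C(p) be a cone with apex p of opening angle at most π/3 containing q, whose axis direction is the unit vector x_l. If p is a nearest neighbor of q in P (i.e., |pq| ≤ |p'q| for all p' ∈ P \ {q}), then q minimizes the inner product ⟨x_l, r - p⟩ among all points r ∈ P ∩ C(p) \ {p}; that is, for every r ∈ P ∩ C(p) with r ≠ p, ⟨x_l, q - p⟩ ≤ ⟨x_l, r - p⟩. -/
open InnerProductGeometry Real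

/-- Lower bound for the inner product of two vectors in terms of their angles to a unit vector. -/
lemma inner_ge_of_angles {d : ℕ} (x a b : EuclideanSpace ℝ (Fin d)) (hx : ‖x‖ = 1) :
    ‖a‖ * ‖b‖ * (Real.cos (angle a x) * Real.cos (angle b x)
      - Real.sin (angle a x) * Real.sin (angle b x)) ≤ (inner ℝ a b : ℝ) := by
  set α := angle a x
  set β := angle b x
  have hsa : 0 ≤ Real.sin α :=
    Real.sin_nonneg_of_nonneg_of_le_pi (angle_nonneg a x) (angle_le_pi a x)
  have hsb : 0 ≤ Real.sin β :=
    Real.sin_nonneg_of_nonneg_of_le_pi (angle_nonneg b x) (angle_le_pi b x)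
  have hca : (inner ℝ x a : ℝ) = ‖a‖ * Real.cos α := by
    rw [real_inner_comm, ← cos_angle_mul_norm_mul_norm, hx]; ring
  have hcb : (inner ℝ x b : ℝ) = ‖b‖ * Real.cos β := by
    rw [real_inner_comm, ← cos_angle_mul_norm_mul_norm, hx]; ring
  set a' := a - (inner ℝ x a : ℝ) • x with ha'
  set b' := b - (inner ℝ x b : ℝ) • x with hb'
  have hxx : (inner ℝ x x : ℝ) = 1 := by
    rw [real_inner_self_eq_norm_mul_norm, hx]; norm_num
  have hsplit : (inner ℝ a b : ℝ) = (inner ℝ a' b' : ℝ) + (inner ℝ x a : ℝ) * (inner ℝ x b : ℝ) := by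
    simp only [ha', hb', inner_sub_left, inner_sub_right, real_inner_smul_left,
      real_inner_smul_right, hxx]
    rw [real_inner_comm a x, real_inner_comm b x]
    ring
  have hna : ‖a'‖ ^ 2 = (‖a‖ * Real.sin α) ^ 2 := by
    have h1 : ‖a'‖ ^ 2 = (inner ℝ a' a' : ℝ) := by
      rw [real_inner_self_eq_norm_mul_norm]; ring
    rw [h1]
    simp only [ha', inner_sub_left, inner_sub_right, real_inner_smul_left,
      real_inner_smul_right, hxx]
    have hca' : (inner ℝ a x : ℝ) = ‖a‖ * Real.cos α := by rw [real_inner_comm]; exact hca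
    rw [hca', hca, real_inner_self_eq_norm_mul_norm]
    have := Real.sin_sq_add_cos_sq α
    nlinarith [this]
  have hnb : ‖b'‖ ^ 2 = (‖b‖ * Real.sin β) ^ 2 := by
    have h1 : ‖b'‖ ^ 2 = (inner ℝ b' b' : ℝ) := by
      rw [real_inner_self_eq_norm_mul_norm]; ring
    rw [h1]
    simp only [hb', inner_sub_left, inner_sub_right, real_inner_smul_left,
      real_inner_smul_right, hxx]
    have hcb' : (inner ℝ b x : ℝ) = ‖b‖ * Real.cos β := by rw [real_inner_comm]; exact hcb
    rw [hcb', hcb, real_inner_self_eq_norm_mul_norm]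
    have := Real.sin_sq_add_cos_sq β
    nlinarith [this]
  have hna' : ‖a'‖ = ‖a‖ * Real.sin α := by
    rw [← Real.sqrt_sq (norm_nonneg a'), hna,
      Real.sqrt_sq (mul_nonneg (norm_nonneg a) hsa)]
  have hnb' : ‖b'‖ = ‖b‖ * Real.sin β := by
    rw [← Real.sqrt_sq (norm_nonneg b'), hnb,
      Real.sqrt_sq (mul_nonneg (norm_nonneg b) hsb)]
  have hcs : -(‖a'‖ * ‖b'‖) ≤ (inner ℝ a' b' : ℝ) := by
    have := abs_real_inner_le_norm a' b'
    cases' abs_le.mp this with h _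
    linarith
  rw [hsplit, hca, hcb]
  rw [hna', hnb'] at hcs
  nlinarith [hcs]

/-- Lemma 1 / Lemma 8.1 of Agarwal–Kaplan–Sharir: if `p` is a nearest
neighbor of `q` in `P` and `q` lies in the cone with apex `p`, axis `xl`, opening
angle `θ ≤ π/3`, then `q` minimizes the projection `⟪xl, · - p⟫` over `P ∩ C(p) \ {p}`. -/
theorem stmt1 {d : ℕ} (P : Finset (EuclideanSpace ℝ (Fin d)))
    (p q : EuclideanSpace ℝ (Fin d)) (hp : p ∈ P) (hq : q ∈ P) (hpq : p ≠ q)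
    (xl : EuclideanSpace ℝ (Fin d)) (hxl : ‖xl‖ = 1)
    (θ : ℝ) (hθ : θ ≤ Real.pi / 3)
    (hqcone : InnerProductGeometry.angle (q - p) xl ≤ θ / 2)
    (hnear : ∀ p' ∈ P, p' ≠ q → dist p q ≤ dist p' q) :
    ∀ r ∈ P, InnerProductGeometry.angle (r - p) xl ≤ θ / 2 → r ≠ p →
      (inner ℝ xl (q - p) : ℝ) ≤ (inner ℝ xl (r - p) : ℝ) := by
  intro r hr hrcone hrp
  rcases eq_or_ne r q with rfl | hrq
  · exact le_refl _
  set a := q - p with ha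
  set b := r - p with hb
  set α := angle a xl with hα
  set β := angle b xl with hβ
  have hA : (0:ℝ) ≤ ‖a‖ := norm_nonneg a
  have hBpos : 0 < ‖b‖ := by
    rw [norm_pos_iff]
    exact sub_ne_zero.mpr hrp
  have hca : (inner ℝ xl a : ℝ) = ‖a‖ * Real.cos α := by
    rw [real_inner_comm, ← cos_angle_mul_norm_mul_norm, hxl]; ring
  have hcb : (inner ℝ xl b : ℝ) = ‖b‖ * Real.cos β := by
    rw [real_inner_comm, ← cos_angle_mul_norm_mul_norm, hxl]; ring
  -- nearest neighbor inequality
  have hdist : ‖a‖ ≤ ‖a - b‖ := by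
    have h := hnear r hr hrq
    rw [dist_eq_norm, dist_eq_norm] at h
    have e1 : p - q = -a := by rw [ha]; abel
    have e2 : r - q = -(a - b) := by rw [ha, hb]; abel
    rw [e1, e2, norm_neg, norm_neg] at h
    exact h
  have hkey : 2 * (inner ℝ a b : ℝ) ≤ ‖b‖ ^ 2 := by
    have h2 : ‖a - b‖ ^ 2 = ‖a‖ ^ 2 - 2 * (inner ℝ a b : ℝ) + ‖b‖ ^ 2 := by
      rw [norm_sub_sq_real]
    nlinarith [hdist, norm_nonneg (a - b), hA]
  have hinner : ‖a‖ * ‖b‖ * (Real.cos α * Real.cos β - Real.sin α * Real.sin β)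
      ≤ (inner ℝ a b : ℝ) := inner_ge_of_angles xl a b hxl
  -- angle bounds
  have hα0 : 0 ≤ α := angle_nonneg a xl
  have hβ0 : 0 ≤ β := angle_nonneg b xl
  have hπ : 0 < Real.pi := Real.pi_pos
  -- cos β ≥ 0
  have hcosβ : 0 ≤ Real.cos β := by
    apply Real.cos_nonneg_of_mem_Icc
    constructor <;> [linarith; linarith [hrcone]]
  -- cos (α + 2β) ≥ 0
  have hcos2 : 0 ≤ Real.cos (α + 2 * β) := by
    apply Real.cos_nonneg_of_mem_Icc
    constructor <;> [linarith; linarith [hqcone, hrcone]]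
  -- rewrite cos (α+β) etc
  have hcab : Real.cos (α + β) = Real.cos α * Real.cos β - Real.sin α * Real.sin β :=
    Real.cos_add α β
  have hprod : 2 * Real.cos (α + β) * Real.cos β = Real.cos (α + 2 * β) + Real.cos α := by
    have h1 := Real.cos_add (α + β) β
    have h2 := Real.cos_sub (α + β) β
    have e1 : α + β + β = α + 2 * β := by ring
    have e2 : α + β - β = α := by ring
    rw [e1] at h1
    rw [e2] at h2
    linarith
  -- from hkey and hinner: ‖b‖ ≥ 2‖a‖ cos(α+β)
  have hB2 : 2 * ‖a‖ * Real.cos (α + β) ≤ ‖b‖ := by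
    rw [hcab]
    nlinarith [hkey, hinner, hBpos]
  rw [hca, hcb]
  nlinarith [hB2, hcosβ, hcos2, hprod, hA, mul_le_mul_of_nonneg_right hB2 hcosβ]
end

section
/- Let P be a finite set of points in ℝ^d and suppose the cones C_1, …, C_c (each of opening angle at most π/3, with axis unit vectors x_1, …, x_c) cover ℝ^d around every apex, i.e., for every p ∈ P and q ∈ P \ {p} there exists l with q ∈ C_l(p). Then the nearest neighbor graph of P is a subgraph of the Semi-Yao graph of P: if p is a nearest neighbor of q in P, then (p,q) is an edge of the Semi-Yao graph. -/
open InnerProductGeometry Real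

set_option maxHeartbeats 1000000 in
lemma sy_key {E : Type*} [NormedAddCommGroup E] [InnerProductSpace ℝ E]
    (x u v : E) (hx : ‖x‖ = 1) (hu : u ≠ 0) (hv : v ≠ 0)
    (hau : InnerProductGeometry.angle u x ≤ Real.pi / 6)
    (hav : InnerProductGeometry.angle v x ≤ Real.pi / 6)
    (hba : (inner ℝ x v : ℝ) < (inner ℝ x u : ℝ)) : ‖u - v‖ < ‖u‖ := by
  have hnu : 0 < ‖u‖ := norm_pos_iff.mpr hu
  have hnv : 0 < ‖v‖ := norm_pos_iff.mpr hv
  set a : ℝ := inner ℝ x u with ha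
  set b : ℝ := inner ℝ x v with hb
  have hxu : (inner ℝ u x : ℝ) = a := (real_inner_comm u x).symm
  have hxv : (inner ℝ v x : ℝ) = b := (real_inner_comm v x).symm
  clear_value a b
  have h3 : Real.sqrt 3 ^ 2 = 3 := Real.sq_sqrt (by norm_num)
  have h3n : 0 ≤ Real.sqrt 3 := Real.sqrt_nonneg 3
  have hcu : Real.sqrt 3 / 2 ≤ Real.cos (angle u x) := by
    rw [← Real.cos_pi_div_six]
    exact Real.cos_le_cos_of_nonneg_of_le_pi (angle_nonneg u x)
      (by linarith [Real.pi_pos]) hau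
  have hcv : Real.sqrt 3 / 2 ≤ Real.cos (angle v x) := by
    rw [← Real.cos_pi_div_six]
    exact Real.cos_le_cos_of_nonneg_of_le_pi (angle_nonneg v x)
      (by linarith [Real.pi_pos]) hav
  have haeq : a = ‖u‖ * Real.cos (angle u x) := by
    have h := InnerProductGeometry.cos_angle u x
    rw [hx, mul_one] at h
    rw [← hxu, h]
    field_simp
  have hbeq : b = ‖v‖ * Real.cos (angle v x) := by
    have h := InnerProductGeometry.cos_angle v x
    rw [hx, mul_one] at h
    rw [← hxv, h]
    field_simp
  have ha2 : Real.sqrt 3 / 2 * ‖u‖ ≤ a := by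
    rw [haeq]; nlinarith
  have hb2 : Real.sqrt 3 / 2 * ‖v‖ ≤ b := by
    rw [hbeq]; nlinarith
  have hapos : 0 < a := by nlinarith
  have hbpos : 0 < b := by nlinarith
  have hnu2 : ‖u‖ ^ 2 ≤ 4 / 3 * a ^ 2 := by
    nlinarith [mul_le_mul ha2 ha2 (by positivity) hapos.le]
  have hnv2 : ‖v‖ ^ 2 ≤ 4 / 3 * b ^ 2 := by
    nlinarith [mul_le_mul hb2 hb2 (by positivity) hbpos.le]
  set up := u - a • x with hup
  set vp := v - b • x with hvp
  clear_value up vp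
  have hupn : ‖up‖ ^ 2 = ‖u‖ ^ 2 - a ^ 2 := by
    rw [hup, norm_sub_sq_real, real_inner_smul_right, hxu, norm_smul, hx, mul_one]
    simp [Real.norm_eq_abs, sq_abs]
    ring
  have hvpn : ‖vp‖ ^ 2 = ‖v‖ ^ 2 - b ^ 2 := by
    rw [hvp, norm_sub_sq_real, real_inner_smul_right, hxv, norm_smul, hx, mul_one]
    simp [Real.norm_eq_abs, sq_abs]
    ring
  have hiv : (inner ℝ up vp : ℝ) = inner ℝ u v - a * b := by
    simp only [hup, hvp, inner_sub_left, inner_sub_right, real_inner_smul_left,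
      real_inner_smul_right, hxu, hxv, real_inner_self_eq_norm_sq, hx, ← ha, ← hb]
    ring
  have hcs : |(inner ℝ up vp : ℝ)| ≤ ‖up‖ * ‖vp‖ := abs_real_inner_le_norm up vp
  have hupb : ‖up‖ ^ 2 ≤ a ^ 2 / 3 := by linarith
  have hvpb : ‖vp‖ ^ 2 ≤ b ^ 2 / 3 := by linarith
  have hprod : ‖up‖ * ‖vp‖ ≤ a * b / 3 := by
    have hab3 : (0:ℝ) ≤ a * b / 3 := by positivity
    have h1 : (‖up‖ * ‖vp‖) ^ 2 ≤ (a * b / 3) ^ 2 := by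
      calc (‖up‖ * ‖vp‖) ^ 2 = ‖up‖ ^ 2 * ‖vp‖ ^ 2 := by ring
        _ ≤ (a ^ 2 / 3) * (b ^ 2 / 3) :=
            mul_le_mul hupb hvpb (sq_nonneg ‖vp‖) (by positivity)
        _ = (a * b / 3) ^ 2 := by ring
    exact le_of_pow_le_pow_left₀ two_ne_zero hab3 h1
  have hinuv : 2 / 3 * (a * b) ≤ (inner ℝ u v : ℝ) := by
    have h2 := (abs_le.mp hcs).1
    linarith [h2, hiv, hprod]
  have hfin : ‖u - v‖ ^ 2 < ‖u‖ ^ 2 := by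
    have hexp := norm_sub_sq_real u v
    have hkey : (4:ℝ) / 3 * b ^ 2 - 4 / 3 * (a * b) < 0 := by
      nlinarith [mul_pos hbpos (sub_pos.mpr hba)]
    linarith [hexp, hinuv, hnv2, hkey]
  exact lt_of_pow_lt_pow_left₀ 2 hnu.le hfin

/-- Lemma 2: if the cones `C l` (opening angle ≤ π/3, axis `x l`) cover the
space around every apex, then every nearest-neighbor edge `(p, q)` is a Semi-Yao edge:
there is a cone `C l` with apex `p` containing `q` in which `q` minimizes the
projection on the axis `x l`. -/
theorem stmt2 {d c : ℕ} (P : Finset (EuclideanSpace ℝ (Fin d)))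
    (C : Fin c → Set (EuclideanSpace ℝ (Fin d)))
    (x : Fin c → EuclideanSpace ℝ (Fin d))
    (hx : ∀ l, ‖x l‖ = 1)
    (θ : ℝ) (hθ : θ ≤ Real.pi / 3)
    (hcone : ∀ l, ∀ u ∈ C l, u ≠ 0 → InnerProductGeometry.angle u (x l) ≤ θ / 2)
    (hcover : ∀ p ∈ P, ∀ q ∈ P, q ≠ p → ∃ l, q - p ∈ C l)
    (p q : EuclideanSpace ℝ (Fin d)) (hp : p ∈ P) (hq : q ∈ P) (hpq : p ≠ q)
    (hnear : ∀ p' ∈ P, p' ≠ q → dist p q ≤ dist p' q) :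
    ∃ l, q - p ∈ C l ∧
      ∀ r ∈ P, r - p ∈ C l → r ≠ p →
        (inner ℝ (x l) (q - p) : ℝ) ≤ (inner ℝ (x l) (r - p) : ℝ) := by
  obtain ⟨l, hC⟩ := hcover p hp q hq hpq.symm
  refine ⟨l, hC, ?_⟩
  intro r hr hrC hrp
  by_contra hlt
  push_neg at hlt
  have hqp : q - p ≠ 0 := sub_ne_zero.mpr hpq.symm
  have hrp' : r - p ≠ 0 := sub_ne_zero.mpr hrp
  have h6 : θ / 2 ≤ Real.pi / 6 := by linarith
  have hangq : InnerProductGeometry.angle (q - p) (x l) ≤ Real.pi / 6 :=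
    le_trans (hcone l _ hC hqp) h6
  have hangr : InnerProductGeometry.angle (r - p) (x l) ≤ Real.pi / 6 :=
    le_trans (hcone l _ hrC hrp') h6
  have hkey := sy_key (x l) (q - p) (r - p) (hx l) hqp hrp' hangq hangr hlt
  have hrq : r ≠ q := by
    rintro rfl
    exact lt_irrefl _ hlt
  have hnr := hnear r hr hrq
  rw [dist_eq_norm, dist_eq_norm] at hnr
  have h1 : q - p - (r - p) = -(r - q) := by abel
  rw [h1, norm_neg, ← norm_neg (q - p), neg_sub] at hkey
  linarith
end

section
/- For any ε > 0 there exists θ > 0 such that: for any point p ∈ ℝ^d, any unit vector x_l, and any two points q, q̂ lying in the cone of apex p, axis x_l, and opening angle θ, if ⟨x_l, q̂ - p⟩ ≤ ⟨x_l, q - p⟩ then |p q̂| + (1+ε)·|q q̂| ≤ (1+ε)·|p q|. -/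
set_option maxHeartbeats 1000000


/-- Abam–de Berg cone inequality: for every `ε > 0` there is `θ > 0` such
that for any apex `p`, unit axis `xl`, and points `q, qhat` in the cone of apex `p`,
axis `xl` and opening angle `θ`, if `qhat` has the smaller `xl`-projection then
`|p qhat| + (1+ε)·|q qhat| ≤ (1+ε)·|p q|`. -/
theorem stmt4 (ε : ℝ) (hε : 0 < ε) :
    ∃ θ : ℝ, 0 < θ ∧
      ∀ (d : ℕ) (p q qhat xl : EuclideanSpace ℝ (Fin d)), ‖xl‖ = 1 →
        InnerProductGeometry.angle (q - p) xl ≤ θ / 2 →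
        InnerProductGeometry.angle (qhat - p) xl ≤ θ / 2 →
        (inner ℝ xl (qhat - p) : ℝ) ≤ (inner ℝ xl (q - p) : ℝ) →
        dist p qhat + (1 + ε) * dist q qhat ≤ (1 + ε) * dist p q := by
  set θ : ℝ := min (ε / (2 * (1 + ε))) 1 with hθdef
  have hεpos : (0:ℝ) < 1 + ε := by linarith
  have hθpos : 0 < θ := lt_min (div_pos hε (by linarith)) one_pos
  have hθ1 : θ ≤ 1 := min_le_right _ _
  have hθε : θ ≤ ε / (2 * (1 + ε)) := min_le_left _ _
  have hθπ : θ ≤ Real.pi := le_trans hθ1 (by linarith [Real.pi_gt_three])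
  have hsinθ : Real.sin θ ≤ θ := Real.sin_le hθpos.le
  have hsinθ0 : 0 ≤ Real.sin θ := Real.sin_nonneg_of_nonneg_of_le_pi hθpos.le hθπ
  have hcosθ : 1 - θ ≤ Real.cos θ := by
    nlinarith [Real.one_sub_sq_div_two_le_cos (x := θ), hθpos.le, hθ1]
  have hK : 1 ≤ (1 + ε) * (Real.cos θ - Real.sin θ) := by
    have h2 : θ * (2 * (1 + ε)) ≤ ε := (le_div_iff₀ (by positivity)).mp hθε
    nlinarith [hcosθ, hsinθ, hεpos]
  clear_value θ
  refine ⟨θ, hθpos, ?_⟩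
  intro d p q qhat xl hxl hq hqh hproj
  set u := q - p with hu
  set v := qhat - p with hv
  set α := InnerProductGeometry.angle u xl with hα
  set β := InnerProductGeometry.angle v xl with hβ
  have hα0 : 0 ≤ α := InnerProductGeometry.angle_nonneg _ _
  have hβ0 : 0 ≤ β := InnerProductGeometry.angle_nonneg _ _
  have hαπ : α ≤ Real.pi := InnerProductGeometry.angle_le_pi _ _
  have hβπ : β ≤ Real.pi := InnerProductGeometry.angle_le_pi _ _
  have hu0 : u ≠ 0 := by
    intro h
    rw [hα, h, InnerProductGeometry.angle_zero_left] at hq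
    linarith [Real.pi_gt_three]
  have hv0 : v ≠ 0 := by
    intro h
    rw [hβ, h, InnerProductGeometry.angle_zero_left] at hqh
    linarith [Real.pi_gt_three]
  set r := ‖u‖ with hr
  set s := ‖v‖ with hs
  have hrpos : 0 < r := norm_pos_iff.mpr hu0
  have hspos : 0 < s := norm_pos_iff.mpr hv0
  set a : ℝ := inner ℝ u xl with ha
  set b : ℝ := inner ℝ v xl with hb
  have hab : b ≤ a := by
    rw [ha, hb, ← real_inner_comm u xl, ← real_inner_comm v xl]
    exact hproj
  have hacos : a = r * Real.cos α := by
    have h := InnerProductGeometry.cos_angle u xl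
    rw [← hα, hxl, ← ha, ← hr] at h
    rw [h]; field_simp [hrpos.ne']
  have hbcos : b = s * Real.cos β := by
    have h := InnerProductGeometry.cos_angle v xl
    rw [← hβ, hxl, ← hb, ← hs] at h
    rw [h]; field_simp [hspos.ne']
  have hsa : 0 ≤ Real.sin α := Real.sin_nonneg_of_nonneg_of_le_pi hα0 hαπ
  have hsb : 0 ≤ Real.sin β := Real.sin_nonneg_of_nonneg_of_le_pi hβ0 hβπ
  have hnormu : ‖u - a • xl‖ = r * Real.sin α := by
    have h1 : ‖u - a • xl‖ ^ 2 = r ^ 2 - a ^ 2 := by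
      rw [norm_sub_sq_real, real_inner_smul_right, norm_smul, hxl, ← ha, ← hr]
      simp [sq_abs]
      ring
    have h2 : (r * Real.sin α) ^ 2 = r ^ 2 - a ^ 2 := by
      have := Real.sin_sq_add_cos_sq α
      rw [hacos]; nlinarith
    nlinarith [norm_nonneg (u - a • xl), mul_nonneg hrpos.le hsa]
  have hnormv : ‖v - b • xl‖ = s * Real.sin β := by
    have h1 : ‖v - b • xl‖ ^ 2 = s ^ 2 - b ^ 2 := by
      rw [norm_sub_sq_real, real_inner_smul_right, norm_smul, hxl, ← hb, ← hs]
      simp [sq_abs]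
      ring
    have h2 : (s * Real.sin β) ^ 2 = s ^ 2 - b ^ 2 := by
      have := Real.sin_sq_add_cos_sq β
      rw [hbcos]; nlinarith
    nlinarith [norm_nonneg (v - b • xl), mul_nonneg hspos.le hsb]
  have hxx : (inner ℝ xl xl : ℝ) = 1 := by
    rw [real_inner_self_eq_norm_sq, hxl]; norm_num
  have hexp : (inner ℝ (u - a • xl) (v - b • xl) : ℝ) = inner ℝ u v - a * b := by
    simp only [inner_sub_left, inner_sub_right, real_inner_smul_left, real_inner_smul_right,
      hxx]
    rw [real_inner_comm v xl, ← ha, ← hb]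
    ring
  have hcs2 : -(‖u - a • xl‖ * ‖v - b • xl‖) ≤ (inner ℝ (u - a • xl) (v - b • xl) : ℝ) := by
    have h1 := abs_real_inner_le_norm (u - a • xl) (v - b • xl)
    have h2 := neg_abs_le (inner ℝ (u - a • xl) (v - b • xl) : ℝ)
    linarith
  rw [hexp, hnormu, hnormv] at hcs2
  clear_value u v α β r s a b
  -- key inner ℝ product bound
  have huv : r * s * Real.cos θ ≤ (inner ℝ u v : ℝ) := by
    have hadd := Real.cos_add α β
    have hsum : Real.cos θ ≤ Real.cos (α + β) :=
      Real.cos_le_cos_of_nonneg_of_le_pi (by linarith) hθπ (by linarith)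
    have h5 : r * s * Real.cos (α + β) ≤ (inner ℝ u v : ℝ) := by
      have : r * s * Real.cos (α + β)
          = (r * Real.cos α) * (s * Real.cos β) - (r * Real.sin α) * (s * Real.sin β) := by
        rw [hadd]; ring
      rw [this, ← hacos, ← hbcos]
      linarith
    have h6 : r * s * Real.cos θ ≤ r * s * Real.cos (α + β) :=
      mul_le_mul_of_nonneg_left hsum (by positivity)
    linarith
  -- projection bound : s cos θ ≤ r
  have hcβ : Real.cos (θ / 2) ≤ Real.cos β :=
    Real.cos_le_cos_of_nonneg_of_le_pi hβ0 (by linarith) hqh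
  have hcθ2 : Real.cos θ ≤ Real.cos (θ / 2) :=
    Real.cos_le_cos_of_nonneg_of_le_pi (by linarith) hθπ (by linarith)
  have hI2 : s * Real.cos θ ≤ r := by
    have e1 : s * Real.cos θ ≤ s * Real.cos (θ / 2) :=
      mul_le_mul_of_nonneg_left hcθ2 hspos.le
    have e2 : s * Real.cos (θ / 2) ≤ s * Real.cos β :=
      mul_le_mul_of_nonneg_left hcβ hspos.le
    have e3 : r * Real.cos α ≤ r := mul_le_of_le_one_right hrpos.le (Real.cos_le_one α)
    linarith [hab, hacos, hbcos]
  have hRHS0 : 0 ≤ r - (Real.cos θ - Real.sin θ) * s := by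
    have h1 : 0 ≤ s * Real.sin θ := mul_nonneg hspos.le hsinθ0
    linarith [hI2, h1]
  have hsq : ‖u - v‖ ^ 2 ≤ (r - (Real.cos θ - Real.sin θ) * s) ^ 2 := by
    have hns := norm_sub_sq_real u v
    rw [← hr, ← hs] at hns
    have hp2 : s ^ 2 * (Real.sin θ ^ 2 + Real.cos θ ^ 2) = s ^ 2 := by
      rw [Real.sin_sq_add_cos_sq, mul_one]
    have H : 0 ≤ s * Real.sin θ * (r - s * Real.cos θ) :=
      mul_nonneg (mul_nonneg hspos.le hsinθ0) (sub_nonneg.mpr hI2)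
    linarith [hns, huv, H, hp2]
  have hI3 : ‖u - v‖ ≤ r - (Real.cos θ - Real.sin θ) * s := by
    calc ‖u - v‖ = Real.sqrt (‖u - v‖ ^ 2) := (Real.sqrt_sq (norm_nonneg _)).symm
      _ ≤ Real.sqrt ((r - (Real.cos θ - Real.sin θ) * s) ^ 2) := Real.sqrt_le_sqrt hsq
      _ = r - (Real.cos θ - Real.sin θ) * s := Real.sqrt_sq hRHS0
  have hd1 : dist p qhat = s := by rw [dist_comm, dist_eq_norm, ← hv, ← hs]
  have hd2 : dist p q = r := by rw [dist_comm, dist_eq_norm, ← hu, ← hr]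
  have hd3 : dist q qhat = ‖u - v‖ := by
    rw [dist_eq_norm, hu, hv, sub_sub_sub_cancel_right]
  rw [hd1, hd2, hd3]
  linarith [hspos.le, mul_le_mul_of_nonneg_left hI3 hεpos.le,
    mul_le_mul_of_nonneg_right hK hspos.le]
end

section
/- Let Ψ = {(B_1, R_1), …, (B_m, R_m)} be a CSPD for a finite set P with respect to a cone C_l of opening angle at most π/3 and axis x_l. For each i let b_i maximize ⟨x_l, ·⟩ over B_i and r_i minimize ⟨x_l, ·⟩ over R_i, and define the edge set E_l = {(b_i, r_i) : i = 1,…,m} (the RNN_l graph). If p ∈ P, q is the nearest neighbor of p in P, and q ∈ C_l(p), then letting i be the unique index with p ∈ B_i and q ∈ R_i, the pair (p, r_i) is an edge of the RNN_l graph, i.e., b_i = p. -/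
/-- If `w` makes angle at most `π/6` with the unit vector `xl`, then its `xl`-projection
dominates `√3/2` of its norm. -/
lemma stmt6_aux {d : ℕ} (xl w : EuclideanSpace ℝ (Fin d)) (hxl : ‖xl‖ = 1) (hw : w ≠ 0)
    (hang : InnerProductGeometry.angle w xl ≤ Real.pi / 6) :
    Real.sqrt 3 / 2 * ‖w‖ ≤ (inner ℝ xl w : ℝ) := by
  have hwn : 0 < ‖w‖ := norm_pos_iff.mpr hw
  have hcos := InnerProductGeometry.cos_angle w xl
  rw [hxl, mul_one] at hcos
  have hcc : Real.sqrt 3 / 2 ≤ Real.cos (InnerProductGeometry.angle w xl) := by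
    rw [← Real.cos_pi_div_six]
    exact Real.cos_le_cos_of_nonneg_of_le_pi (InnerProductGeometry.angle_nonneg w xl)
      (by linarith [Real.pi_pos]) hang
  have h : Real.sqrt 3 / 2 * ‖w‖ ≤ (inner ℝ w xl : ℝ) / ‖w‖ * ‖w‖ := by
    rw [← hcos]
    exact mul_le_mul_of_nonneg_right hcc hwn.le
  rw [div_mul_cancel₀ _ hwn.ne'] at h
  rwa [real_inner_comm]

set_option maxHeartbeats 1000000 in
/-- Key geometric lemma: for two vectors `u`, `v` making angle ≤ `π/6` with the unit
vector `xl`, if the projection of `u` is strictly smaller than that of `v`, then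
`‖v - u‖ < ‖v‖`. -/
lemma stmt6_key {d : ℕ} (xl u v : EuclideanSpace ℝ (Fin d)) (hxl : ‖xl‖ = 1)
    (hu0 : u ≠ 0) (hv0 : v ≠ 0)
    (hangu : InnerProductGeometry.angle u xl ≤ Real.pi / 6)
    (hangv : InnerProductGeometry.angle v xl ≤ Real.pi / 6)
    (hlt : (inner ℝ xl u : ℝ) < (inner ℝ xl v : ℝ)) :
    ‖v - u‖ < ‖v‖ := by
  have hcuN := stmt6_aux xl u hxl hu0 hangu
  have hcvN := stmt6_aux xl v hxl hv0 hangv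
  have hs3 : Real.sqrt 3 ^ 2 = 3 := Real.sq_sqrt (by norm_num)
  have hs3pos : 0 < Real.sqrt 3 := Real.sqrt_pos.mpr (by norm_num)
  have hun : 0 < ‖u‖ := norm_pos_iff.mpr hu0
  have hvn : 0 < ‖v‖ := norm_pos_iff.mpr hv0
  have hcu0 : 0 < (inner ℝ xl u : ℝ) := lt_of_lt_of_le (by positivity) hcuN
  have hcv0 : 0 < (inner ℝ xl v : ℝ) := lt_of_lt_of_le (by positivity) hcvN
  have hun2 : ‖u‖ ^ 2 ≤ 4 / 3 * (inner ℝ xl u : ℝ) ^ 2 := by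
    nlinarith [mul_le_mul hcuN hcuN (by positivity) hcu0.le]
  have hvn2 : ‖v‖ ^ 2 ≤ 4 / 3 * (inner ℝ xl v : ℝ) ^ 2 := by
    nlinarith [mul_le_mul hcvN hcvN (by positivity) hcv0.le]
  have hxl2 : (inner ℝ xl xl : ℝ) = 1 := by
    rw [real_inner_self_eq_norm_sq, hxl]; norm_num
  have hu'2 : ‖u - (inner ℝ xl u : ℝ) • xl‖ ^ 2 = ‖u‖ ^ 2 - (inner ℝ xl u : ℝ) ^ 2 := by
    rw [norm_sub_sq_real, real_inner_smul_right, norm_smul, hxl, Real.norm_eq_abs, mul_one,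
      sq_abs, real_inner_comm u xl]
    ring
  have hv'2 : ‖v - (inner ℝ xl v : ℝ) • xl‖ ^ 2 = ‖v‖ ^ 2 - (inner ℝ xl v : ℝ) ^ 2 := by
    rw [norm_sub_sq_real, real_inner_smul_right, norm_smul, hxl, Real.norm_eq_abs, mul_one,
      sq_abs, real_inner_comm v xl]
    ring
  have hiuv : (inner ℝ (u - (inner ℝ xl u : ℝ) • xl) (v - (inner ℝ xl v : ℝ) • xl) : ℝ)
      = (inner ℝ u v : ℝ) - (inner ℝ xl u : ℝ) * (inner ℝ xl v : ℝ) := by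
    rw [inner_sub_left, inner_sub_right, inner_sub_right, real_inner_smul_left,
      real_inner_smul_left, real_inner_smul_right, real_inner_smul_right, hxl2,
      real_inner_comm xl u]
    ring
  have hcs : |(inner ℝ (u - (inner ℝ xl u : ℝ) • xl) (v - (inner ℝ xl v : ℝ) • xl) : ℝ)|
      ≤ ‖u - (inner ℝ xl u : ℝ) • xl‖ * ‖v - (inner ℝ xl v : ℝ) • xl‖ :=
    abs_real_inner_le_norm _ _
  have hbound : ‖u - (inner ℝ xl u : ℝ) • xl‖ * ‖v - (inner ℝ xl v : ℝ) • xl‖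
      ≤ (inner ℝ xl u : ℝ) * (inner ℝ xl v : ℝ) / 3 := by
    have h1 : ‖u - (inner ℝ xl u : ℝ) • xl‖ ^ 2 ≤ (inner ℝ xl u : ℝ) ^ 2 / 3 := by
      rw [hu'2]; linarith
    have h2 : ‖v - (inner ℝ xl v : ℝ) • xl‖ ^ 2 ≤ (inner ℝ xl v : ℝ) ^ 2 / 3 := by
      rw [hv'2]; linarith
    nlinarith [norm_nonneg (u - (inner ℝ xl u : ℝ) • xl), norm_nonneg (v - (inner ℝ xl v : ℝ) • xl),
      mul_nonneg (norm_nonneg (u - (inner ℝ xl u : ℝ) • xl)) (norm_nonneg (v - (inner ℝ xl v : ℝ) • xl)),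
      mul_pos hcu0 hcv0,
      sq_nonneg (‖u - (inner ℝ xl u : ℝ) • xl‖ * ‖v - (inner ℝ xl v : ℝ) • xl‖ * 3
        - (inner ℝ xl u : ℝ) * (inner ℝ xl v : ℝ))]
  have hinner_lb : 2 / 3 * ((inner ℝ xl u : ℝ) * (inner ℝ xl v : ℝ)) ≤ (inner ℝ u v : ℝ) := by
    have h := (abs_le.mp hcs).1
    rw [hiuv] at h
    linarith
  have hkey : ‖v - u‖ ^ 2 < ‖v‖ ^ 2 := by
    rw [norm_sub_sq_real, real_inner_comm u v]
    nlinarith [mul_pos hcu0 (sub_pos.mpr hlt)]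
  exact lt_of_pow_lt_pow_left₀ 2 (norm_nonneg v) hkey

/-- for the RNN_l graph built from a CSPD with respect to a cone of opening
angle `θ ≤ π/3` with unit axis `xl`, if `q` is the nearest neighbor of `p` and `q ∈ C_l(p)`,
then in the unique pair `(B i, R i)` with `p ∈ B i`, `q ∈ R i`, the point `b i` of maximum
`xl`-projection in `B i` is `p` itself; hence `(p, r i)` is an edge of the RNN_l graph. -/
theorem stmt6 {d m : ℕ} (P : Finset (EuclideanSpace ℝ (Fin d)))
    (xl : EuclideanSpace ℝ (Fin d)) (hxl : ‖xl‖ = 1)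
    (θ : ℝ) (hθ : θ ≤ Real.pi / 3)
    (Cl : Set (EuclideanSpace ℝ (Fin d)))
    (hcone : ∀ u ∈ Cl, u ≠ 0 → InnerProductGeometry.angle u xl ≤ θ / 2)
    (h0 : (0 : EuclideanSpace ℝ (Fin d)) ∉ Cl)
    (B R : Fin m → Finset (EuclideanSpace ℝ (Fin d)))
    (hBP : ∀ i, B i ⊆ P) (hRP : ∀ i, R i ⊆ P)
    (ha : ∀ p ∈ P, ∀ q ∈ P, q - p ∈ Cl → ∃! i : Fin m, p ∈ B i ∧ q ∈ R i)
    (hb : ∀ i : Fin m, ∀ p ∈ B i, ∀ q ∈ R i, q - p ∈ Cl)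
    (hdistinct : Set.InjOn (fun a => (inner ℝ xl a : ℝ)) (P : Set (EuclideanSpace ℝ (Fin d))))
    (b r : Fin m → EuclideanSpace ℝ (Fin d))
    (hbmax : ∀ i, b i ∈ B i ∧ ∀ a ∈ B i, (inner ℝ xl a : ℝ) ≤ (inner ℝ xl (b i) : ℝ))
    (hrmin : ∀ i, r i ∈ R i ∧ ∀ a ∈ R i, (inner ℝ xl (r i) : ℝ) ≤ (inner ℝ xl a : ℝ))
    (p q : EuclideanSpace ℝ (Fin d)) (hp : p ∈ P) (hq : q ∈ P) (hqp : q ≠ p)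
    (hnear : ∀ r' ∈ P, r' ≠ p → dist p q ≤ dist p r')
    (hqC : q - p ∈ Cl)
    (i : Fin m) (hpB : p ∈ B i) (hqR : q ∈ R i) :
    b i = p := by
  by_contra hne
  have haB : b i ∈ B i := (hbmax i).1
  have haP : b i ∈ P := hBP i haB
  have hple : (inner ℝ xl p : ℝ) ≤ (inner ℝ xl (b i) : ℝ) := (hbmax i).2 p hpB
  have hplt : (inner ℝ xl p : ℝ) < (inner ℝ xl (b i) : ℝ) := by
    rcases hple.lt_or_eq with h | h
    · exact h
    · exact absurd (hdistinct haP hp h.symm) hne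
  have huC : q - b i ∈ Cl := hb i (b i) haB q hqR
  have hu0 : q - b i ≠ 0 := fun h => h0 (h ▸ huC)
  have hv0 : q - p ≠ 0 := fun h => hqp (by rwa [sub_eq_zero] at h)
  have hθ2 : θ / 2 ≤ Real.pi / 6 := by linarith
  have hangu : InnerProductGeometry.angle (q - b i) xl ≤ Real.pi / 6 :=
    (hcone _ huC hu0).trans hθ2
  have hangv : InnerProductGeometry.angle (q - p) xl ≤ Real.pi / 6 :=
    (hcone _ hqC hv0).trans hθ2
  have hlt : (inner ℝ xl (q - b i) : ℝ) < (inner ℝ xl (q - p) : ℝ) := by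
    rw [inner_sub_right, inner_sub_right]
    linarith
  have hkey := stmt6_key xl (q - b i) (q - p) hxl hu0 hv0 hangu hangv hlt
  have hvu : (q - p) - (q - b i) = b i - p := by abel
  rw [hvu] at hkey
  have hda : dist p (b i) < dist p q := by
    rw [dist_eq_norm, dist_eq_norm, ← neg_sub (b i) p, norm_neg, ← neg_sub q p, norm_neg]
    exact hkey
  exact absurd (hnear (b i) haP hne) (not_le.mpr hda)
end

section
/- With ε > 0, and cones C_1, …, C_c of opening angle θ chosen small enough that the quantitative cone inequality holds (for q, q̂ in a common cone of apex p with ⟨x_l, q̂ - p⟩ ≤ ⟨x_l, q - p⟩ one has |p q̂| ≤ (1+ε)|pq|), and CSPDs Ψ_{C_l} for each cone, define the RNN graph as G(P, ⋃_l E_l) where E_l = {(b_i, r_i)} as above. Then for every p ∈ P with |P| ≥ 2, there exists an edge (p, q̂) in the RNN graph such that q̂ is a (1+ε)-nearest neighbor of p. -/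
lemma coneA {d : ℕ} (x u : EuclideanSpace ℝ (Fin d)) (hx : ‖x‖ = 1) (hu : u ≠ 0)
    (h : InnerProductGeometry.angle u x ≤ Real.pi / 6) :
    Real.sqrt 3 / 2 * ‖u‖ ≤ (inner ℝ x u : ℝ) := by
  have hcos : Real.cos (InnerProductGeometry.angle u x)
      = (inner ℝ u x : ℝ) / (‖u‖ * ‖x‖) := InnerProductGeometry.cos_angle u x
  have h1 : Real.cos (Real.pi / 6) ≤ Real.cos (InnerProductGeometry.angle u x) := by
    apply Real.cos_le_cos_of_nonneg_of_le_pi (InnerProductGeometry.angle_nonneg u x) _ h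
    linarith [Real.pi_pos]
  rw [Real.cos_pi_div_six, hcos, hx, mul_one] at h1
  have hun : 0 < ‖u‖ := norm_pos_iff.mpr hu
  rw [real_inner_comm]
  calc Real.sqrt 3 / 2 * ‖u‖ ≤ (inner ℝ u x : ℝ) / ‖u‖ * ‖u‖ := by
        apply mul_le_mul_of_nonneg_right h1 hun.le
    _ = (inner ℝ u x : ℝ) := by field_simp

lemma keygeo {d : ℕ} (x u w : EuclideanSpace ℝ (Fin d)) (hx : ‖x‖ = 1)
    (hu : Real.sqrt 3 / 2 * ‖u‖ ≤ (inner ℝ x u : ℝ))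
    (hw : Real.sqrt 3 / 2 * ‖w‖ ≤ (inner ℝ x w : ℝ))
    (hw0 : w ≠ 0)
    (hlt : (inner ℝ x w : ℝ) < (inner ℝ x u : ℝ)) :
    ‖u - w‖ < ‖u‖ := by
  set su : ℝ := inner ℝ x u with hsu
  set sw : ℝ := inner ℝ x w with hsw
  clear_value su sw
  have hs3 : Real.sqrt 3 ^ 2 = 3 := Real.sq_sqrt (by norm_num)
  have hwn : 0 < ‖w‖ := norm_pos_iff.mpr hw0
  have hswpos : 0 < sw := lt_of_lt_of_le (by positivity) hw
  have hsupos : 0 < su := hswpos.trans hlt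
  have hun2 : ‖u‖ ^ 2 ≤ 4 / 3 * su ^ 2 := by
    nlinarith [norm_nonneg u, hu, hs3, mul_le_mul hu hu (by positivity) hsupos.le]
  have hwn2 : ‖w‖ ^ 2 ≤ 4 / 3 * sw ^ 2 := by
    nlinarith [norm_nonneg w, hw, hs3, mul_le_mul hw hw (by positivity) hswpos.le]
  set up : EuclideanSpace ℝ (Fin d) := u - su • x with hup
  set wp : EuclideanSpace ℝ (Fin d) := w - sw • x with hwp
  clear_value up wp
  have hxx : (inner ℝ x x : ℝ) = 1 := by
    rw [real_inner_self_eq_norm_sq, hx]; norm_num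
  have hupx : (inner ℝ x up : ℝ) = 0 := by
    rw [hup, inner_sub_right, real_inner_smul_right, hxx, mul_one, ← hsu, sub_self]
  have hwpx : (inner ℝ x wp : ℝ) = 0 := by
    rw [hwp, inner_sub_right, real_inner_smul_right, hxx, mul_one, ← hsw, sub_self]
  have hupn : ‖up‖ ^ 2 = ‖u‖ ^ 2 - su ^ 2 := by
    have h := norm_sub_sq_real u (su • x)
    rw [norm_smul, hx] at h
    rw [hup, h, real_inner_smul_right, real_inner_comm, ← hsu]
    simp [abs_of_pos hsupos]; ring
  have hwpn : ‖wp‖ ^ 2 = ‖w‖ ^ 2 - sw ^ 2 := by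
    have h := norm_sub_sq_real w (sw • x)
    rw [norm_smul, hx] at h
    rw [hwp, h, real_inner_smul_right, real_inner_comm, ← hsw]
    simp [abs_of_pos hswpos]; ring
  have hupb : ‖up‖ ^ 2 ≤ su ^ 2 / 3 := by rw [hupn]; linarith
  have hwpb : ‖wp‖ ^ 2 ≤ sw ^ 2 / 3 := by rw [hwpn]; linarith
  have hdecomp : (inner ℝ u w : ℝ) = su * sw + (inner ℝ up wp : ℝ) := by
    have h1 : u = su • x + up := by rw [hup]; abel
    have h2 : w = sw • x + wp := by rw [hwp]; abel
    calc (inner ℝ u w : ℝ) = inner ℝ (su • x + up) (sw • x + wp) := by rw [← h1, ← h2]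
      _ = su * sw + (inner ℝ up wp : ℝ) := by
          rw [inner_add_left, inner_add_right, inner_add_right,
            real_inner_smul_left, real_inner_smul_left, real_inner_smul_right,
            real_inner_smul_right, hxx, hwpx]
          have h3 : (inner ℝ up x : ℝ) = 0 := by rw [real_inner_comm]; exact hupx
          rw [h3]; ring
  have hprod : ‖up‖ * ‖wp‖ ≤ su * sw / 3 := by
    have h2 := mul_le_mul hupb hwpb (sq_nonneg _) (by positivity)
    nlinarith [mul_nonneg (norm_nonneg up) (norm_nonneg wp), mul_pos hsupos hswpos]
  have hip : su * sw - su * sw / 3 ≤ (inner ℝ u w : ℝ) := by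
    have h3 : -(‖up‖ * ‖wp‖) ≤ (inner ℝ up wp : ℝ) :=
      neg_le_of_abs_le (abs_real_inner_le_norm up wp)
    rw [hdecomp]; linarith
  have hkey : sw ^ 2 < su * sw := by rw [sq]; exact mul_lt_mul_of_pos_right hlt hswpos
  have hsq : ‖u - w‖ ^ 2 < ‖u‖ ^ 2 := by
    have h := norm_sub_sq_real u w
    rw [h]; linarith
  exact lt_of_pow_lt_pow_left₀ 2 (norm_nonneg u) hsq

/-- Lemma 9: in the RNN graph built from CSPDs for cones `C l` of opening
angle `θ ≤ π/3` (narrow enough that the quantitative cone inequality holds) covering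
`ℝ^d \ {0}`, every point `p` of `P` (with `|P| ≥ 2`) has an incident RNN edge `(p, q̂)`
whose other endpoint `q̂` is a `(1+ε)`-nearest neighbor of `p`. -/
theorem stmt7 {d c : ℕ} (ε : ℝ) (hε : 0 < ε)
    (P : Finset (EuclideanSpace ℝ (Fin d))) (hcard : 2 ≤ P.card)
    (C : Fin c → Set (EuclideanSpace ℝ (Fin d)))
    (x : Fin c → EuclideanSpace ℝ (Fin d)) (hx : ∀ l, ‖x l‖ = 1)
    (θ : ℝ) (hθ : θ ≤ Real.pi / 3)
    (hcone : ∀ l, ∀ u ∈ C l, u ≠ 0 → InnerProductGeometry.angle u (x l) ≤ θ / 2)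
    (h0 : ∀ l, (0 : EuclideanSpace ℝ (Fin d)) ∉ C l)
    (hcover : ∀ v : EuclideanSpace ℝ (Fin d), v ≠ 0 → ∃ l, v ∈ C l)
    -- the quantitative cone inequality (θ is small enough relative to ε):
    (hquant : ∀ l, ∀ p a b : EuclideanSpace ℝ (Fin d), a - p ∈ C l → b - p ∈ C l →
      (inner ℝ (x l) (b - p) : ℝ) ≤ (inner ℝ (x l) (a - p) : ℝ) →
      dist p b ≤ (1 + ε) * dist p a)
    (hdistinct : ∀ l, Set.InjOn (fun a => (inner ℝ (x l) a : ℝ))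
      (P : Set (EuclideanSpace ℝ (Fin d))))
    -- a CSPD for each cone:
    (m : Fin c → ℕ) (B R : ∀ l : Fin c, Fin (m l) → Finset (EuclideanSpace ℝ (Fin d)))
    (hBP : ∀ l i, B l i ⊆ P) (hRP : ∀ l i, R l i ⊆ P)
    (ha : ∀ l, ∀ p ∈ P, ∀ q ∈ P, q - p ∈ C l → ∃! i : Fin (m l), p ∈ B l i ∧ q ∈ R l i)
    (hb : ∀ l, ∀ i : Fin (m l), ∀ p ∈ B l i, ∀ q ∈ R l i, q - p ∈ C l)
    -- the RNN endpoints: b l i maximizes and r l i minimizes the x l-projection: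
    (b r : ∀ l : Fin c, Fin (m l) → EuclideanSpace ℝ (Fin d))
    (hbmax : ∀ l i, b l i ∈ B l i ∧
      ∀ a ∈ B l i, (inner ℝ (x l) a : ℝ) ≤ (inner ℝ (x l) (b l i) : ℝ))
    (hrmin : ∀ l i, r l i ∈ R l i ∧
      ∀ a ∈ R l i, (inner ℝ (x l) (r l i) : ℝ) ≤ (inner ℝ (x l) a : ℝ)) :
    ∀ p ∈ P, ∃ (l : Fin c) (i : Fin (m l)),
      b l i = p ∧ r l i ∈ P ∧ r l i ≠ p ∧
        ∀ q ∈ P, q ≠ p → dist p (r l i) ≤ (1 + ε) * dist p q := by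
  intro p hp
  classical
  have hθ6 : θ / 2 ≤ Real.pi / 6 := by linarith
  -- cone membership gives the quantitative lower bound on the projection
  have hconeL : ∀ (l : Fin c) (u : EuclideanSpace ℝ (Fin d)), u ∈ C l →
      u ≠ 0 ∧ Real.sqrt 3 / 2 * ‖u‖ ≤ (inner ℝ (x l) u : ℝ) := by
    intro l u hu
    have hne : u ≠ 0 := by rintro rfl; exact h0 l hu
    exact ⟨hne, coneA (x l) u (hx l) hne ((hcone l u hu hne).trans hθ6)⟩
  -- main descent
  have main : ∀ n : ℕ, ∀ qh ∈ P, qh ≠ p →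
      (P.filter fun z => dist p z < dist p qh).card ≤ n →
      ∃ (l : Fin c) (i : Fin (m l)), b l i = p ∧
        dist p (r l i) ≤ (1 + ε) * dist p qh := by
    intro n
    induction n with
    | zero =>
      intro qh hqh hne hcardle
      have hv : qh - p ≠ 0 := sub_ne_zero_of_ne hne
      obtain ⟨l, hl⟩ := hcover _ hv
      obtain ⟨i, ⟨hpB, hqR⟩, _⟩ := ha l p hp qh hqh hl
      by_cases hbi : b l i = p
      · refine ⟨l, i, hbi, ?_⟩
        have hrR := (hrmin l i).1
        have hrC : r l i - p ∈ C l := hb l i p hpB (r l i) hrR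
        have hle : (inner ℝ (x l) (r l i - p) : ℝ) ≤ (inner ℝ (x l) (qh - p) : ℝ) := by
          rw [inner_sub_right, inner_sub_right]
          have := (hrmin l i).2 qh hqR
          linarith
        exact hquant l p qh (r l i) hl hrC hle
      · exfalso
        -- b l i gives a strictly closer point, contradicting the empty filter
        have hbB := (hbmax l i).1
        have hbP : b l i ∈ P := hBP l i hbB
        have hwC : qh - b l i ∈ C l := hb l i (b l i) hbB qh hqR
        obtain ⟨hu0, huA⟩ := hconeL l (qh - p) hl
        obtain ⟨hw0, hwA⟩ := hconeL l (qh - b l i) hwC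
        have hproj : (inner ℝ (x l) p : ℝ) < (inner ℝ (x l) (b l i) : ℝ) := by
          rcases lt_or_eq_of_le ((hbmax l i).2 p hpB) with h | h
          · exact h
          · exact absurd (hdistinct l hbP hp h.symm) hbi
        have hltw : (inner ℝ (x l) (qh - b l i) : ℝ) < (inner ℝ (x l) (qh - p) : ℝ) := by
          rw [inner_sub_right, inner_sub_right]; linarith
        have hlt' : ‖(qh - p) - (qh - b l i)‖ < ‖qh - p‖ :=
          keygeo (x l) (qh - p) (qh - b l i) (hx l) huA hwA hw0 hltw
        have hdb : dist p (b l i) < dist p qh := by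
          have h1 : (qh - p) - (qh - b l i) = b l i - p := by abel
          rw [h1] at hlt'
          rw [dist_eq_norm', dist_eq_norm']
          exact hlt'
        have : b l i ∈ P.filter fun z => dist p z < dist p qh :=
          Finset.mem_filter.mpr ⟨hbP, hdb⟩
        have := Finset.card_pos.mpr ⟨_, this⟩
        omega
    | succ n ih =>
      intro qh hqh hne hcardle
      have hv : qh - p ≠ 0 := sub_ne_zero_of_ne hne
      obtain ⟨l, hl⟩ := hcover _ hv
      obtain ⟨i, ⟨hpB, hqR⟩, _⟩ := ha l p hp qh hqh hl
      by_cases hbi : b l i = p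
      · refine ⟨l, i, hbi, ?_⟩
        have hrR := (hrmin l i).1
        have hrC : r l i - p ∈ C l := hb l i p hpB (r l i) hrR
        have hle : (inner ℝ (x l) (r l i - p) : ℝ) ≤ (inner ℝ (x l) (qh - p) : ℝ) := by
          rw [inner_sub_right, inner_sub_right]
          have := (hrmin l i).2 qh hqR
          linarith
        exact hquant l p qh (r l i) hl hrC hle
      · have hbB := (hbmax l i).1
        have hbP : b l i ∈ P := hBP l i hbB
        have hwC : qh - b l i ∈ C l := hb l i (b l i) hbB qh hqR
        obtain ⟨hu0, huA⟩ := hconeL l (qh - p) hl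
        obtain ⟨hw0, hwA⟩ := hconeL l (qh - b l i) hwC
        have hproj : (inner ℝ (x l) p : ℝ) < (inner ℝ (x l) (b l i) : ℝ) := by
          rcases lt_or_eq_of_le ((hbmax l i).2 p hpB) with h | h
          · exact h
          · exact absurd (hdistinct l hbP hp h.symm) hbi
        have hltw : (inner ℝ (x l) (qh - b l i) : ℝ) < (inner ℝ (x l) (qh - p) : ℝ) := by
          rw [inner_sub_right, inner_sub_right]; linarith
        have hlt' : ‖(qh - p) - (qh - b l i)‖ < ‖qh - p‖ :=
          keygeo (x l) (qh - p) (qh - b l i) (hx l) huA hwA hw0 hltw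
        have hdb : dist p (b l i) < dist p qh := by
          have h1 : (qh - p) - (qh - b l i) = b l i - p := by abel
          rw [h1] at hlt'
          rw [dist_eq_norm', dist_eq_norm']
          exact hlt'
        have hbnep : b l i ≠ p := hbi
        -- filter set strictly decreases
        have hsub : (P.filter fun z => dist p z < dist p (b l i)) ⊆
            (P.filter fun z => dist p z < dist p qh).erase (b l i) := by
          intro z hz
          rw [Finset.mem_filter] at hz
          refine Finset.mem_erase.mpr ⟨?_, Finset.mem_filter.mpr ⟨hz.1, hz.2.trans hdb⟩⟩
          rintro rfl
          exact absurd hz.2 (lt_irrefl _)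
        have hmem : b l i ∈ P.filter fun z => dist p z < dist p qh :=
          Finset.mem_filter.mpr ⟨hbP, hdb⟩
        have hcard' : (P.filter fun z => dist p z < dist p (b l i)).card ≤ n := by
          have h1 := Finset.card_le_card hsub
          have h2 := Finset.card_erase_of_mem hmem
          omega
        obtain ⟨l', i', hbi', hd'⟩ := ih (b l i) hbP hbnep hcard'
        refine ⟨l', i', hbi', hd'.trans ?_⟩
        have : (0:ℝ) < 1 + ε := by linarith
        exact mul_le_mul_of_nonneg_left hdb.le this.le
  -- pick the nearest neighbor
  have herase : (P.erase p).Nonempty := by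
    rw [← Finset.card_pos, Finset.card_erase_of_mem hp]
    omega
  obtain ⟨q₀, hq₀, hq₀min⟩ := Finset.exists_min_image (P.erase p) (dist p) herase
  have hq₀P : q₀ ∈ P := Finset.mem_of_mem_erase hq₀
  have hq₀ne : q₀ ≠ p := Finset.ne_of_mem_erase hq₀
  obtain ⟨l, i, hbi, hd⟩ := main ((P.filter fun z => dist p z < dist p q₀).card)
    q₀ hq₀P hq₀ne le_rfl
  have hpB : p ∈ B l i := hbi ▸ (hbmax l i).1
  have hrR := (hrmin l i).1
  have hrP : r l i ∈ P := hRP l i hrR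
  have hrC : r l i - p ∈ C l := hb l i p hpB (r l i) hrR
  have hrne : r l i ≠ p := by
    intro h
    rw [h, sub_self] at hrC
    exact h0 l hrC
  refine ⟨l, i, hbi, hrP, hrne, ?_⟩
  intro q hq hqne
  have hq' : q ∈ P.erase p := Finset.mem_erase.mpr ⟨hqne, hq⟩
  have : dist p q₀ ≤ dist p q := hq₀min q hq'
  calc dist p (r l i) ≤ (1 + ε) * dist p q₀ := hd
    _ ≤ (1 + ε) * dist p q := by
        apply mul_le_mul_of_nonneg_left this
        linarith
end
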